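/- Let (X, μ) be a measure space with μ a finite measure, let c : X → ℝ be measurable, and let g, v : X → ℝ be integrable functions such that g(x) > v(x) whenever c(x) < 0, g(x) < v(x) whenever c(x) > 0, and g(x) = v(x) whenever c(x) = 0. Define O(c') = ∫ (if c(x) < c' then g(x) else v(x)) dμ(x). Assume further that for every c' < 0 the set {x : c' ≤ c(x) < 0} has positive μ-measure and for every c' > 0 the set {x : 0 < c(x) < c'} has positive μ-measure. Then c' = 0 is the unique global maximizer of O: O(c') < O(0) for every c' ≠ 0. -/

import Mathlib

open MeasureTheory

lemma payoff_integrable {X : Type*} [MeasurableSpace X] (μ : Measure X)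
    (c g v : X → ℝ) (hc : Measurable c)
    (hg : Integrable g μ) (hv : Integrable v μ) (t : ℝ) :
    Integrable (fun x => if c x < t then g x else v x) μ := by
  have hs : MeasurableSet {x | c x < t} := measurableSet_lt hc measurable_const
  classical
  have := MeasureTheory.Integrable.piecewise hs (hg.integrableOn (s := {x | c x < t}))
    hv.integrableOn
  refine this.congr (ae_of_all _ fun x => ?_)
  simp [Set.piecewise, Set.mem_setOf_eq]

/-- Proposition P1: under positive-mass conditions near the boundary, `c' = 0` is the unique
global maximizer of the payoff functional `O(c') = ∫ (if c(x) < c' then g(x) else v(x)) dμ`. -/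
theorem payoff_functional_unique_max_at_boundary
    {X : Type*} [MeasurableSpace X] (μ : Measure X) [IsFiniteMeasure μ]
    (c g v : X → ℝ) (hc : Measurable c)
    (hg : Integrable g μ) (hv : Integrable v μ)
    (hlt : ∀ x, c x < 0 → g x > v x)
    (hgt : ∀ x, 0 < c x → g x < v x)
    (heq : ∀ x, c x = 0 → g x = v x)
    (hmass_neg : ∀ c' : ℝ, c' < 0 → 0 < μ {x | c' ≤ c x ∧ c x < 0})
    (hmass_pos : ∀ c' : ℝ, 0 < c' → 0 < μ {x | 0 < c x ∧ c x < c'}) :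
    ∀ c' : ℝ, c' ≠ 0 →
      (∫ x, (if c x < c' then g x else v x) ∂μ)
        < ∫ x, (if c x < 0 then g x else v x) ∂μ := by
  intro c' hc'
  have hI0 := payoff_integrable μ c g v hc hg hv 0
  have hI1 := payoff_integrable μ c g v hc hg hv c'
  rw [← sub_pos, ← integral_sub hI0 hI1]
  rcases lt_or_gt_of_ne hc' with h | h
  · -- c' < 0 : difference is indicator of {c' ≤ c x < 0} of (g - v)
    set s : Set X := {x | c' ≤ c x ∧ c x < 0} with hs_def
    have hs : MeasurableSet s :=
      (measurableSet_le measurable_const hc).inter (measurableSet_lt hc measurable_const)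
    have hpt : (fun x => (if c x < 0 then g x else v x) - (if c x < c' then g x else v x))
        = s.indicator (fun x => g x - v x) := by
      funext x
      by_cases hx : x ∈ s
      · obtain ⟨h1, h2⟩ := id hx
        rw [Set.indicator_of_mem hx]
        rw [if_pos h2, if_neg (by linarith)]
      · rw [Set.indicator_of_notMem hx]
        simp only [hs_def, Set.mem_setOf_eq, not_and_or, not_le, not_lt] at hx
        rcases hx with hx | hx
        · rw [if_pos (by linarith), if_pos hx]; ring
        · rw [if_neg (by linarith), if_neg (by linarith)]; ring
    rw [hpt]
    have hInt : Integrable (s.indicator (fun x => g x - v x)) μ :=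
      (hg.sub hv).indicator hs
    have hnn : 0 ≤ s.indicator (fun x => g x - v x) := by
      intro x
      by_cases hx : x ∈ s
      · rw [Set.indicator_of_mem hx]
        have := hlt x hx.2; dsimp; linarith
      · rw [Set.indicator_of_notMem hx]; simp
    rw [(integral_pos_iff_support_of_nonneg hnn hInt :)]
    refine lt_of_lt_of_le (hmass_neg c' h) (measure_mono ?_)
    intro x hx
    have := hlt x hx.2
    simp only [Function.mem_support, Set.indicator_of_mem (show x ∈ s from hx)]
    dsimp; intro hcontra; linarith
  · -- 0 < c' : difference is indicator of {0 ≤ c x < c'} of (v - g)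
    set s : Set X := {x | 0 ≤ c x ∧ c x < c'} with hs_def
    have hs : MeasurableSet s :=
      (measurableSet_le measurable_const hc).inter (measurableSet_lt hc measurable_const)
    have hpt : (fun x => (if c x < 0 then g x else v x) - (if c x < c' then g x else v x))
        = s.indicator (fun x => v x - g x) := by
      funext x
      by_cases hx : x ∈ s
      · obtain ⟨h1, h2⟩ := id hx
        rw [Set.indicator_of_mem hx]
        rw [if_neg (by linarith), if_pos h2]
      · rw [Set.indicator_of_notMem hx]
        simp only [hs_def, Set.mem_setOf_eq, not_and_or, not_le, not_lt] at hx
        rcases hx with hx | hx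
        · rw [if_pos hx, if_pos (by linarith)]; ring
        · rw [if_neg (by linarith), if_neg (by linarith)]; ring
    rw [hpt]
    have hInt : Integrable (s.indicator (fun x => v x - g x)) μ :=
      (hv.sub hg).indicator hs
    have hnn : 0 ≤ s.indicator (fun x => v x - g x) := by
      intro x
      by_cases hx : x ∈ s
      · rw [Set.indicator_of_mem hx]
        rcases eq_or_lt_of_le hx.1 with h0 | h0
        · have := heq x h0.symm; dsimp; linarith
        · have := hgt x h0; dsimp; linarith
      · rw [Set.indicator_of_notMem hx]; simp
    rw [(integral_pos_iff_support_of_nonneg hnn hInt :)]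
    refine lt_of_lt_of_le (hmass_pos c' h) (measure_mono ?_)
    intro x hx
    have hxs : x ∈ s := ⟨le_of_lt hx.1, hx.2⟩
    have := hgt x hx.1
    simp only [Function.mem_support, Set.indicator_of_mem hxs]
    dsimp; intro hcontra; linarith
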